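/- (Convex generalization error of RSGD-scale) Let Z be a measurable space and f : ℝ^d × Z → ℝ be such that for every z ∈ Z, f(·, z) is convex, differentiable with β-Lipschitz gradient, and has ‖∇f(x, z)‖ ≤ L for all x. Let S = (z_1, …, z_N) and S' = (z'_1, …, z'_N) be two datasets in Z^N differing in exactly one entry. Let i_0, …, i_{T−1} be i.i.d. random indices uniform on {1, …, N}, and run RSGD-scale with scaling factor α ∈ (0,1), learning rates γ_t satisfying 0 < γ_t ≤ 2/β, the same initialization x_0 = x'_0, r_0 = r'_0 = 0, and the same index sequence on both datasets: x_{t+1} = x_t − α·(r_t + γ_t·∇f(x_t − r_t, z_{i_t})), r_{t+1} = (1−α)·(r_t + γ_t·∇f(x_t − r_t, z_{i_t})), and analogously for x'_t, r'_t with samples from S'. Then E‖x_T − x'_T‖ ≤ (2L/N)·∑_{t=0}^{T−1} (1 − (1−α)^{T−t})·γ_t, and consequently for every z ∈ Z, E[f(x_T, z) − f(x'_T, z)] ≤ (2L²/N)·∑_{t=0}^{T−1} (1 − (1−α)^{T−t})·γ_t. -/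

import Mathlib

open MeasureTheory ProbabilityTheory

section AuxRSGD
open InnerProductSpace RealInnerProductSpace Set

variable {E : Type*} [NormedAddCommGroup E] [InnerProductSpace ℝ E] [CompleteSpace E]

lemma line_hasDerivAt (g : E → ℝ) (hg : Differentiable ℝ g) (x h : E) (t : ℝ) :
    HasDerivAt (fun s : ℝ => g (x + s • h)) ⟪gradient g (x + t • h), h⟫ t := by
  have h1 : HasDerivAt (fun s : ℝ => x + s • h) h t := by
    simpa using ((hasDerivAt_id t).smul_const h).const_add x
  have h2 := (hg (x + t • h)).hasGradientAt.hasFDerivAt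
  have := h2.comp_hasDerivAt t h1
  exact this

lemma convex_grad_ineq (g : E → ℝ) (hc : ConvexOn ℝ univ g) (hg : Differentiable ℝ g)
    (x y : E) : g x + ⟪gradient g x, y - x⟫ ≤ g y := by
  set φ : ℝ → ℝ := fun s => g (x + s • (y - x)) with hφ
  have hconv : ConvexOn ℝ univ φ := by
    have := hc.comp_affineMap (AffineMap.lineMap x y)
    have heq : φ = g ∘ (AffineMap.lineMap x y) := by
      funext s
      simp [φ, AffineMap.lineMap_apply, add_comm]
    rw [heq]
    simpa using this
  have hd : HasDerivAt φ ⟪gradient g (x + (0:ℝ) • (y - x)), y - x⟫ 0 :=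
    line_hasDerivAt g hg x (y - x) 0
  have := hconv.le_slope_of_hasDerivAt (mem_univ (0:ℝ)) (mem_univ 1) one_pos hd
  rw [slope_def_field] at this
  simp only [zero_smul, add_zero] at hd this
  have h0 : φ 0 = g x := by simp [φ]
  have h1 : φ 1 = g y := by simp [φ]
  rw [h0, h1] at this
  simp at this
  rw [inner_sub_right]; simp; linarith

lemma descent_lemma (g : E → ℝ) (hg : Differentiable ℝ g) {β : ℝ} (hβ : 0 < β)
    (hsm : ∀ a b, ‖gradient g a - gradient g b‖ ≤ β * ‖a - b‖) (x h : E) :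
    g (x + h) ≤ g x + ⟪gradient g x, h⟫ + β / 2 * ‖h‖ ^ 2 := by
  set c : ℝ := ⟪gradient g x, h⟫ with hc
  set ψ : ℝ → ℝ := fun t => g (x + t • h) - t * c - β / 2 * t ^ 2 * ‖h‖ ^ 2 with hψ
  have hder : ∀ t : ℝ, HasDerivAt ψ
      (⟪gradient g (x + t • h), h⟫ - c - β * t * ‖h‖ ^ 2) t := by
    intro t
    have h1 := line_hasDerivAt g hg x h t
    have h2 : HasDerivAt (fun t : ℝ => t * c) c t := by
      simpa using (hasDerivAt_id t).mul_const c
    have h3 : HasDerivAt (fun t : ℝ => β / 2 * t ^ 2 * ‖h‖ ^ 2)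
        (β * t * ‖h‖ ^ 2) t := by
      have := (hasDerivAt_pow 2 t).const_mul (β / 2)
      have := this.mul_const (‖h‖ ^ 2)
      refine this.congr_deriv ?_
      ring
    exact (h1.sub h2).sub h3
  have hmono : AntitoneOn ψ (Icc (0:ℝ) 1) := by
    apply antitoneOn_of_deriv_nonpos (convex_Icc 0 1)
    · exact (Differentiable.continuous (fun t => (hder t).differentiableAt)).continuousOn
    · intro t ht
      exact ((hder t).differentiableAt).differentiableWithinAt
    · intro t ht
      rw [interior_Icc] at ht
      rw [(hder t).deriv]
      have hb : ⟪gradient g (x + t • h) - gradient g x, h⟫ ≤ β * t * ‖h‖ ^ 2 := by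
        calc ⟪gradient g (x + t • h) - gradient g x, h⟫
            ≤ ‖gradient g (x + t • h) - gradient g x‖ * ‖h‖ := real_inner_le_norm _ _
          _ ≤ β * ‖x + t • h - x‖ * ‖h‖ := by
              gcongr; exact hsm _ _
          _ = β * t * ‖h‖ ^ 2 := by
              rw [add_sub_cancel_left, norm_smul, Real.norm_eq_abs,
                abs_of_pos ht.1]
              ring
      rw [inner_sub_left] at hb
      linarith
  have := hmono (left_mem_Icc.2 zero_le_one) (right_mem_Icc.2 zero_le_one) zero_le_one
  simp only [ψ, zero_smul, add_zero, one_smul, one_pow, zero_pow, mul_zero,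
    zero_mul, sub_zero, one_mul, mul_one] at this
  linarith

lemma bregman_lower (g : E → ℝ) (hc : ConvexOn ℝ univ g) (hg : Differentiable ℝ g)
    {β : ℝ} (hβ : 0 < β) (hsm : ∀ a b, ‖gradient g a - gradient g b‖ ≤ β * ‖a - b‖)
    (x y : E) :
    g x + ⟪gradient g x, y - x⟫ + 1 / (2 * β) * ‖gradient g y - gradient g x‖ ^ 2 ≤ g y := by
  set v : E := gradient g y - gradient g x with hv
  have hdesc := descent_lemma g hg hβ hsm y (-(β⁻¹ • v))
  have hlow := convex_grad_ineq g hc hg x (y + -(β⁻¹ • v))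
  have hsimp : y + -(β⁻¹ • v) - x = (y - x) + -(β⁻¹ • v) := by abel
  rw [hsimp, inner_add_right] at hlow
  simp only [inner_neg_right, real_inner_smul_right] at hdesc hlow
  have hnn : ‖-(β⁻¹ • v)‖ ^ 2 = β⁻¹ ^ 2 * ‖v‖ ^ 2 := by
    rw [norm_neg, norm_smul, Real.norm_eq_abs, abs_of_pos (by positivity : (0:ℝ) < β⁻¹), mul_pow]
  rw [hnn] at hdesc
  have hinner : ⟪gradient g y, v⟫ - ⟪gradient g x, v⟫ = ‖v‖ ^ 2 := by
    rw [← inner_sub_left, ← hv, real_inner_self_eq_norm_sq]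
  have hβ' : β ≠ 0 := hβ.ne'
  have e1 : β / 2 * (β⁻¹ ^ 2 * ‖v‖ ^ 2) = 1 / (2 * β) * ‖v‖ ^ 2 := by
    field_simp
  have h3 : β⁻¹ * ⟪gradient g y, v⟫ - β⁻¹ * ⟪gradient g x, v⟫ = β⁻¹ * ‖v‖ ^ 2 := by
    rw [← mul_sub, hinner]
  have e2 : β⁻¹ * ‖v‖ ^ 2 - 1 / (2 * β) * ‖v‖ ^ 2 = 1 / (2 * β) * ‖v‖ ^ 2 := by
    field_simp; ring
  rw [e1] at hdesc
  linarith

lemma cocoercive (g : E → ℝ) (hc : ConvexOn ℝ univ g) (hg : Differentiable ℝ g)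
    {β : ℝ} (hβ : 0 < β) (hsm : ∀ a b, ‖gradient g a - gradient g b‖ ≤ β * ‖a - b‖)
    (x y : E) :
    β⁻¹ * ‖gradient g x - gradient g y‖ ^ 2 ≤ ⟪gradient g x - gradient g y, x - y⟫ := by
  have h1 := bregman_lower g hc hg hβ hsm x y
  have h2 := bregman_lower g hc hg hβ hsm y x
  have hrevn : ‖gradient g y - gradient g x‖ = ‖gradient g x - gradient g y‖ :=
    norm_sub_rev _ _
  rw [hrevn] at h1
  have hin : ⟪gradient g x, y - x⟫ + ⟪gradient g y, x - y⟫
      = -⟪gradient g x - gradient g y, x - y⟫ := by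
    rw [inner_sub_left]
    have : (⟪gradient g x, y - x⟫ : ℝ) = -⟪gradient g x, x - y⟫ := by
      rw [← inner_neg_right]; congr 1; abel
    rw [this]; ring
  have e2 : 1 / (2 * β) * ‖gradient g x - gradient g y‖ ^ 2
      + 1 / (2 * β) * ‖gradient g x - gradient g y‖ ^ 2
      = β⁻¹ * ‖gradient g x - gradient g y‖ ^ 2 := by
    field_simp
    try ring
  linarith

lemma step_nonexpansive (g : E → ℝ) (hc : ConvexOn ℝ univ g) (hg : Differentiable ℝ g)
    {β : ℝ} (hβ : 0 < β) (hsm : ∀ a b, ‖gradient g a - gradient g b‖ ≤ β * ‖a - b‖)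
    {γ : ℝ} (hγ0 : 0 ≤ γ) (hγ2 : γ ≤ 2 / β) (u v : E) :
    ‖(u - γ • gradient g u) - (v - γ • gradient g v)‖ ≤ ‖u - v‖ := by
  have hrw : (u - γ • gradient g u) - (v - γ • gradient g v)
      = (u - v) - γ • (gradient g u - gradient g v) := by
    rw [smul_sub]; abel
  rw [hrw]
  have hsq : ‖(u - v) - γ • (gradient g u - gradient g v)‖ ^ 2
      = ‖u - v‖ ^ 2 - 2 * (γ * ⟪gradient g u - gradient g v, u - v⟫)
        + γ ^ 2 * ‖gradient g u - gradient g v‖ ^ 2 := by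
    rw [norm_sub_sq_real, real_inner_smul_right, norm_smul, Real.norm_eq_abs,
      abs_of_nonneg hγ0, mul_pow]
    rw [real_inner_comm]
    try ring
  have hco := cocoercive g hc hg hβ hsm u v
  have hkey : ‖(u - v) - γ • (gradient g u - gradient g v)‖ ^ 2 ≤ ‖u - v‖ ^ 2 := by
    rw [hsq]
    have h1 : γ ^ 2 * ‖gradient g u - gradient g v‖ ^ 2
        ≤ 2 * γ * (β⁻¹ * ‖gradient g u - gradient g v‖ ^ 2) := by
      have : γ * γ ≤ (2 / β) * γ := mul_le_mul_of_nonneg_right hγ2 hγ0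
      have hb : γ ^ 2 ≤ 2 * γ * β⁻¹ := by
        rw [pow_two]
        calc γ * γ ≤ (2 / β) * γ := this
          _ = 2 * γ * β⁻¹ := by
              field_simp
              try ring
      nlinarith [sq_nonneg ‖gradient g u - gradient g v‖]
    nlinarith [mul_le_mul_of_nonneg_left hco (by positivity : (0:ℝ) ≤ 2 * γ)]
  nlinarith [norm_nonneg ((u - v) - γ • (gradient g u - gradient g v)), norm_nonneg (u - v)]

end AuxRSGD

/-- Convex generalization error of RSGD-scale: with convex, β-smooth,
L-Lipschitz losses, two datasets differing in exactly one entry, i.i.d. uniform sampling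
indices shared by both runs, RSGD-scale with `α ∈ (0,1)` and `0 < γ t ≤ 2/β` satisfies
`E‖x T - x' T‖ ≤ (2L/N) ∑_{t<T} (1 - (1-α)^(T-t)) γ t`, and consequently for every `z`,
`E[f(x T, z) - f(x' T, z)] ≤ (2L²/N) ∑_{t<T} (1 - (1-α)^(T-t)) γ t`. -/
theorem rsgd_scale_convex_stability
    {d N : ℕ} (hN : 1 ≤ N)
    {Z : Type*} [MeasurableSpace Z]
    (f : EuclideanSpace ℝ (Fin d) → Z → ℝ) (β L : ℝ) (hβ : 0 < β) (hL : 0 ≤ L)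
    (hconv : ∀ z, ConvexOn ℝ Set.univ (f · z))
    (hdiff : ∀ z, Differentiable ℝ (f · z))
    (hsmooth : ∀ z x y, ‖gradient (f · z) x - gradient (f · z) y‖ ≤ β * ‖x - y‖)
    (hlip : ∀ z x, ‖gradient (f · z) x‖ ≤ L)
    (z z' : Fin N → Z) (i₀ : Fin N)
    (hdiff_one : ∀ j, j ≠ i₀ → z j = z' j) (hne : z i₀ ≠ z' i₀)
    {Ω : Type*} {m0 : MeasurableSpace Ω} (μ : Measure Ω) [IsProbabilityMeasure μ]
    (idx : ℕ → Ω → Fin N)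
    (hidx_meas : ∀ t, Measurable (idx t))
    (hidx_unif : ∀ t k, μ {ω | idx t ω = k} = (N : ENNReal)⁻¹)
    (hidx_indep : iIndepFun idx μ)
    (α : ℝ) (hα0 : 0 < α) (hα1 : α < 1)
    (γ : ℕ → ℝ) (hγ : ∀ t, 0 < γ t ∧ γ t ≤ 2 / β)
    (x x' r r' : ℕ → Ω → EuclideanSpace ℝ (Fin d))
    (x0 : EuclideanSpace ℝ (Fin d))
    (hx0 : ∀ ω, x 0 ω = x0) (hx0' : ∀ ω, x' 0 ω = x0)
    (hr0 : ∀ ω, r 0 ω = 0) (hr0' : ∀ ω, r' 0 ω = 0)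
    (hxrec : ∀ t ω, x (t + 1) ω
      = x t ω - α • (r t ω + γ t • gradient (f · (z (idx t ω))) (x t ω - r t ω)))
    (hrrec : ∀ t ω, r (t + 1) ω
      = (1 - α) • (r t ω + γ t • gradient (f · (z (idx t ω))) (x t ω - r t ω)))
    (hxrec' : ∀ t ω, x' (t + 1) ω
      = x' t ω - α • (r' t ω + γ t • gradient (f · (z' (idx t ω))) (x' t ω - r' t ω)))
    (hrrec' : ∀ t ω, r' (t + 1) ω
      = (1 - α) • (r' t ω + γ t • gradient (f · (z' (idx t ω))) (x' t ω - r' t ω)))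
    (T : ℕ) (hT : 1 ≤ T) :
    (∫ ω, ‖x T ω - x' T ω‖ ∂μ
        ≤ (2 * L / N) * ∑ t ∈ Finset.range T, (1 - (1 - α) ^ (T - t)) * γ t) ∧
    ∀ zz : Z, ∫ ω, (f (x T ω) zz - f (x' T ω) zz) ∂μ
        ≤ (2 * L ^ 2 / N) * ∑ t ∈ Finset.range T, (1 - (1 - α) ^ (T - t)) * γ t := by
  classical
  have hγ0 : ∀ t, (0:ℝ) ≤ γ t := fun t => (hγ t).1.le
  have hαle : (0:ℝ) ≤ 1 - α := by linarith
  -- reference point recurrences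
  have hu : ∀ t ω, x (t+1) ω - r (t+1) ω
      = (x t ω - r t ω) - γ t • gradient (f · (z (idx t ω))) (x t ω - r t ω) := by
    intro t ω; rw [hxrec, hrrec]; module
  have hu' : ∀ t ω, x' (t+1) ω - r' (t+1) ω
      = (x' t ω - r' t ω) - γ t • gradient (f · (z' (idx t ω))) (x' t ω - r' t ω) := by
    intro t ω; rw [hxrec', hrrec']; module
  have hD : ∀ t ω, x (t+1) ω - x' (t+1) ω
      = (1-α) • (x t ω - x' t ω)
        + α • ((x (t+1) ω - r (t+1) ω) - (x' (t+1) ω - r' (t+1) ω)) := by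
    intro t ω; rw [hxrec, hxrec', hrrec, hrrec']; module
  -- continuity of gradients
  have hgc : ∀ zz : Z, Continuous (gradient (f · zz)) := by
    intro zz
    refine (LipschitzWith.of_dist_le_mul (K := Real.toNNReal β) fun a b => ?_).continuous
    rw [dist_eq_norm, dist_eq_norm, Real.coe_toNNReal β hβ.le]
    exact hsmooth zz a b
  -- measurability of gradient terms
  have hgm : ∀ (zs : Fin N → Z) (t : ℕ) (w : Ω → EuclideanSpace ℝ (Fin d)), Measurable w →
      Measurable (fun ω => gradient (f · (zs (idx t ω))) (w ω)) := by
    intro zs t w hw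
    have heq : (fun ω => gradient (f · (zs (idx t ω))) (w ω))
        = fun ω => ∑ k : Fin N, if k = idx t ω then gradient (f · (zs k)) (w ω) else 0 := by
      funext ω
      rw [Finset.sum_ite_eq' Finset.univ (idx t ω) (fun k => gradient (f · (zs k)) (w ω))]
      simp
    rw [heq]
    refine Finset.measurable_sum _ fun k _ => ?_
    have hk : MeasurableSet {ω | k = idx t ω} := by
      have := hidx_meas t (measurableSet_singleton k)
      convert this using 1
      ext ω; simp [eq_comm]
    exact Measurable.ite hk ((hgc (zs k)).measurable.comp hw) measurable_const
  -- measurability of iterates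
  have hms : ∀ t, Measurable (x t) ∧ Measurable (r t) ∧ Measurable (x' t) ∧ Measurable (r' t) := by
    intro t
    induction t with
    | zero =>
      refine ⟨?_, ?_, ?_, ?_⟩
      · rw [show x 0 = fun _ => x0 from funext hx0]; exact measurable_const
      · rw [show r 0 = fun _ => 0 from funext hr0]; exact measurable_const
      · rw [show x' 0 = fun _ => x0 from funext hx0']; exact measurable_const
      · rw [show r' 0 = fun _ => 0 from funext hr0']; exact measurable_const
    | succ t ih =>
      obtain ⟨hxm, hrm, hxm', hrm'⟩ := ih
      have hG := hgm z t _ (hxm.sub hrm)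
      have hG' := hgm z' t _ (hxm'.sub hrm')
      refine ⟨?_, ?_, ?_, ?_⟩
      · rw [show x (t+1) = fun ω => x t ω - α • (r t ω + γ t •
            gradient (f · (z (idx t ω))) (x t ω - r t ω)) from funext (hxrec t)]
        exact hxm.sub ((hrm.add (hG.const_smul (γ t))).const_smul α)
      · rw [show r (t+1) = fun ω => (1-α) • (r t ω + γ t •
            gradient (f · (z (idx t ω))) (x t ω - r t ω)) from funext (hrrec t)]
        exact (hrm.add (hG.const_smul (γ t))).const_smul (1-α)
      · rw [show x' (t+1) = fun ω => x' t ω - α • (r' t ω + γ t •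
            gradient (f · (z' (idx t ω))) (x' t ω - r' t ω)) from funext (hxrec' t)]
        exact hxm'.sub ((hrm'.add (hG'.const_smul (γ t))).const_smul α)
      · rw [show r' (t+1) = fun ω => (1-α) • (r' t ω + γ t •
            gradient (f · (z' (idx t ω))) (x' t ω - r' t ω)) from funext (hrrec' t)]
        exact (hrm'.add (hG'.const_smul (γ t))).const_smul (1-α)
  -- pointwise step bound
  have hstep : ∀ t ω, ‖(x (t+1) ω - r (t+1) ω) - (x' (t+1) ω - r' (t+1) ω)‖
      ≤ ‖(x t ω - r t ω) - (x' t ω - r' t ω)‖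
        + (if idx t ω = i₀ then 2*L*γ t else 0) := by
    intro t ω
    rw [hu t ω, hu' t ω]
    by_cases hcase : idx t ω = i₀
    · rw [if_pos hcase]
      set a := x t ω - r t ω
      set b := x' t ω - r' t ω
      set G := gradient (f · (z (idx t ω))) a
      set G' := gradient (f · (z' (idx t ω))) b
      calc ‖(a - γ t • G) - (b - γ t • G')‖
          = ‖(a - b) - (γ t • G - γ t • G')‖ := by congr 1; abel
        _ ≤ ‖a - b‖ + ‖γ t • G - γ t • G'‖ := norm_sub_le _ _
        _ ≤ ‖a - b‖ + 2*L*γ t := by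
            have h1 : ‖γ t • G - γ t • G'‖ ≤ ‖γ t • G‖ + ‖γ t • G'‖ := norm_sub_le _ _
            have h2 : ‖γ t • G‖ ≤ γ t * L := by
              rw [norm_smul, Real.norm_eq_abs, abs_of_nonneg (hγ0 t)]
              exact mul_le_mul_of_nonneg_left (hlip _ _) (hγ0 t)
            have h3 : ‖γ t • G'‖ ≤ γ t * L := by
              rw [norm_smul, Real.norm_eq_abs, abs_of_nonneg (hγ0 t)]
              exact mul_le_mul_of_nonneg_left (hlip _ _) (hγ0 t)
            have : (2:ℝ)*L*γ t = γ t * L + γ t * L := by ring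
            rw [this]
            linarith
    · rw [if_neg hcase, add_zero, ← hdiff_one (idx t ω) hcase]
      exact step_nonexpansive (f · (z (idx t ω))) (hconv _) (hdiff _) hβ
        (hsmooth _) (hγ0 t) (hγ t).2 _ _
  -- crude uniform bounds
  set B : ℕ → ℝ := fun t => 2*L*∑ s ∈ Finset.range t, γ s with hB_def
  have hB0 : ∀ t, 0 ≤ B t := by
    intro t
    have h1 : 0 ≤ ∑ s ∈ Finset.range t, γ s := Finset.sum_nonneg fun s _ => hγ0 s
    have h2 : (0:ℝ) ≤ 2*L := by linarith
    exact mul_nonneg h2 h1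
  have hBsucc : ∀ t, B (t+1) = B t + 2*L*γ t := by
    intro t; simp only [hB_def, Finset.sum_range_succ]; ring
  have hBmono : ∀ t, B t ≤ B (t+1) := by
    intro t; rw [hBsucc]
    have : 0 ≤ 2*L*γ t := mul_nonneg (by linarith) (hγ0 t)
    linarith
  have hif_le : ∀ t ω, (if idx t ω = i₀ then 2*L*γ t else 0) ≤ 2*L*γ t := by
    intro t ω
    split
    · exact le_refl _
    · exact mul_nonneg (by linarith) (hγ0 t)
  have hubd : ∀ t ω, ‖(x t ω - r t ω) - (x' t ω - r' t ω)‖ ≤ B t := by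
    intro t
    induction t with
    | zero =>
      intro ω
      simp [hx0, hx0', hr0, hr0', hB_def]
    | succ t ih =>
      intro ω
      refine (hstep t ω).trans ?_
      rw [hBsucc]
      exact add_le_add (ih ω) (hif_le t ω)
  have hxbd : ∀ t ω, ‖x t ω - x' t ω‖ ≤ B t := by
    intro t
    induction t with
    | zero =>
      intro ω
      simp [hx0, hx0', hB_def]
    | succ t ih =>
      intro ω
      rw [hD t ω]
      calc ‖(1-α) • (x t ω - x' t ω)
            + α • ((x (t+1) ω - r (t+1) ω) - (x' (t+1) ω - r' (t+1) ω))‖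
          ≤ (1-α) * ‖x t ω - x' t ω‖
            + α * ‖(x (t+1) ω - r (t+1) ω) - (x' (t+1) ω - r' (t+1) ω)‖ := by
            refine (norm_add_le _ _).trans ?_
            rw [norm_smul, norm_smul, Real.norm_eq_abs, Real.norm_eq_abs,
              abs_of_nonneg hαle, abs_of_nonneg hα0.le]
        _ ≤ (1-α) * B t + α * B (t+1) := by
            refine add_le_add ?_ ?_
            · exact mul_le_mul_of_nonneg_left (ih ω) hαle
            · exact mul_le_mul_of_nonneg_left (hubd (t+1) ω) hα0.le
        _ ≤ B (t+1) := by nlinarith [hBmono t, hB0 (t+1)]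
  -- integrability helper
  have hintab : ∀ (g : Ω → ℝ) (C : ℝ), Measurable g → (∀ ω, ‖g ω‖ ≤ C) → Integrable g μ :=
    fun g C hm hb => ⟨hm.aestronglyMeasurable,
      MeasureTheory.HasFiniteIntegral.of_bounded (C := C) (Filter.Eventually.of_forall hb)⟩
  -- measurability of the delta functions
  have hδm : ∀ t, Measurable (fun ω => ‖(x t ω - r t ω) - (x' t ω - r' t ω)‖) := by
    intro t
    obtain ⟨h1, h2, h3, h4⟩ := hms t
    exact ((h1.sub h2).sub (h3.sub h4)).norm
  have hDm : ∀ t, Measurable (fun ω => ‖x t ω - x' t ω‖) := by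
    intro t
    obtain ⟨h1, _, h3, _⟩ := hms t
    exact (h1.sub h3).norm
  have hδint : ∀ t, Integrable (fun ω => ‖(x t ω - r t ω) - (x' t ω - r' t ω)‖) μ := by
    intro t
    refine hintab _ (B t) (hδm t) fun ω => ?_
    rw [norm_norm]; exact hubd t ω
  have hDint : ∀ t, Integrable (fun ω => ‖x t ω - x' t ω‖) μ := by
    intro t
    refine hintab _ (B t) (hDm t) fun ω => ?_
    rw [norm_norm]; exact hxbd t ω
  -- indicator integral
  have hindm : ∀ t, Measurable (fun ω => if idx t ω = i₀ then 2*L*γ t else 0) := by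
    intro t
    exact Measurable.ite (hidx_meas t (measurableSet_singleton i₀)) measurable_const
      measurable_const
  have hindint : ∀ t, Integrable (fun ω => if idx t ω = i₀ then 2*L*γ t else 0) μ := by
    intro t
    refine hintab _ (2*L*γ t) (hindm t) fun ω => ?_
    rw [Real.norm_eq_abs]
    split
    · rw [abs_of_nonneg (mul_nonneg (by linarith) (hγ0 t))]
    · rw [abs_zero]; exact mul_nonneg (by linarith) (hγ0 t)
  have hind : ∀ t, ∫ ω, (if idx t ω = i₀ then 2*L*γ t else 0) ∂μ
      = 2*L*γ t * (N:ℝ)⁻¹ := by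
    intro t
    have heq : (fun ω => if idx t ω = i₀ then 2*L*γ t else 0)
        = Set.indicator {ω | idx t ω = i₀} (fun _ => 2*L*γ t) := by
      funext ω
      by_cases h : idx t ω = i₀ <;> simp [Set.indicator_apply, h]
    have hset : MeasurableSet {ω | idx t ω = i₀} := hidx_meas t (measurableSet_singleton i₀)
    rw [heq, integral_indicator_const _ hset, measureReal_def, hidx_unif t i₀, smul_eq_mul]
    rw [ENNReal.toReal_inv]
    simp only [ENNReal.toReal_natCast]
    ring
  -- expected reference-point stability
  have hEδ : ∀ t, ∫ ω, ‖(x t ω - r t ω) - (x' t ω - r' t ω)‖ ∂μ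
      ≤ 2*L/N * ∑ s ∈ Finset.range t, γ s := by
    intro t
    induction t with
    | zero =>
      have : (fun ω => ‖(x 0 ω - r 0 ω) - (x' 0 ω - r' 0 ω)‖) = fun _ => (0:ℝ) := by
        funext ω; simp [hx0, hx0', hr0, hr0']
      rw [this, integral_zero]
      simp
    | succ t ih =>
      have h1 : ∫ ω, ‖(x (t+1) ω - r (t+1) ω) - (x' (t+1) ω - r' (t+1) ω)‖ ∂μ
          ≤ ∫ ω, (‖(x t ω - r t ω) - (x' t ω - r' t ω)‖
            + (if idx t ω = i₀ then 2*L*γ t else 0)) ∂μ :=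
        integral_mono (hδint (t+1)) ((hδint t).add (hindint t)) (hstep t)
      rw [integral_add (hδint t) (hindint t), hind t] at h1
      refine h1.trans ?_
      rw [Finset.sum_range_succ]
      have : 2*L/N * (∑ s ∈ Finset.range t, γ s + γ t)
          = 2*L/N * ∑ s ∈ Finset.range t, γ s + 2*L*γ t*(N:ℝ)⁻¹ := by
        rw [div_eq_mul_inv]; ring
      rw [this]
      linarith [ih]
  -- algebraic identity for the weighted sums
  have hS : ∀ T : ℕ, ∑ t ∈ Finset.range (T+1), (1-(1-α)^(T+1-t)) * γ t
      = (1-α) * ∑ t ∈ Finset.range T, (1-(1-α)^(T-t)) * γ t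
        + α * ∑ t ∈ Finset.range (T+1), γ t := by
    intro T
    have key : ∀ t ∈ Finset.range T, (1-(1-α)^(T+1-t)) * γ t
        = (1-α)*((1-(1-α)^(T-t)) * γ t) + α * γ t := by
      intro t ht
      have h2 : T + 1 - t = (T - t) + 1 := by
        have := Finset.mem_range.mp ht; omega
      rw [h2, pow_succ]
      ring
    calc ∑ t ∈ Finset.range (T+1), (1-(1-α)^(T+1-t)) * γ t
        = ∑ t ∈ Finset.range T, (1-(1-α)^(T+1-t)) * γ t + (1-(1-α)^(T+1-T)) * γ T :=
          Finset.sum_range_succ _ _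
      _ = ∑ t ∈ Finset.range T, ((1-α)*((1-(1-α)^(T-t)) * γ t) + α * γ t)
            + (1-(1-α)^1) * γ T := by
          have hTT : T + 1 - T = 1 := by omega
          rw [Finset.sum_congr rfl key, hTT]
      _ = (1-α) * ∑ t ∈ Finset.range T, (1-(1-α)^(T-t)) * γ t
            + α * (∑ t ∈ Finset.range T, γ t + γ T) := by
          rw [Finset.sum_add_distrib, ← Finset.mul_sum, ← Finset.mul_sum, pow_one]
          ring
      _ = (1-α) * ∑ t ∈ Finset.range T, (1-(1-α)^(T-t)) * γ t
            + α * ∑ t ∈ Finset.range (T+1), γ t := by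
          rw [Finset.sum_range_succ]
  -- main recursion for x
  have hEx : ∀ T : ℕ, ∫ ω, ‖x T ω - x' T ω‖ ∂μ
      ≤ 2*L/N * ∑ t ∈ Finset.range T, (1-(1-α)^(T-t)) * γ t := by
    intro T
    induction T with
    | zero =>
      have : (fun ω => ‖x 0 ω - x' 0 ω‖) = fun _ => (0:ℝ) := by
        funext ω; simp [hx0, hx0']
      rw [this, integral_zero]
      simp
    | succ T ih =>
      have hpt : ∀ ω, ‖x (T+1) ω - x' (T+1) ω‖
          ≤ (1-α) * ‖x T ω - x' T ω‖
            + α * ‖(x (T+1) ω - r (T+1) ω) - (x' (T+1) ω - r' (T+1) ω)‖ := by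
        intro ω
        rw [hD T ω]
        refine (norm_add_le _ _).trans ?_
        rw [norm_smul, norm_smul, Real.norm_eq_abs, Real.norm_eq_abs,
          abs_of_nonneg hαle, abs_of_nonneg hα0.le]
      have h1 : ∫ ω, ‖x (T+1) ω - x' (T+1) ω‖ ∂μ
          ≤ ∫ ω, ((1-α) * ‖x T ω - x' T ω‖
            + α * ‖(x (T+1) ω - r (T+1) ω) - (x' (T+1) ω - r' (T+1) ω)‖) ∂μ :=
        integral_mono (hDint (T+1)) (((hDint T).const_mul (1-α)).add
          ((hδint (T+1)).const_mul α)) hpt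
      rw [integral_add ((hDint T).const_mul (1-α)) ((hδint (T+1)).const_mul α),
        integral_const_mul, integral_const_mul] at h1
      refine h1.trans ?_
      have h2 : (1-α) * ∫ ω, ‖x T ω - x' T ω‖ ∂μ
          ≤ (1-α) * (2*L/N * ∑ t ∈ Finset.range T, (1-(1-α)^(T-t)) * γ t) :=
        mul_le_mul_of_nonneg_left ih hαle
      have h3 : α * ∫ ω, ‖(x (T+1) ω - r (T+1) ω) - (x' (T+1) ω - r' (T+1) ω)‖ ∂μ
          ≤ α * (2*L/N * ∑ t ∈ Finset.range (T+1), γ t) :=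
        mul_le_mul_of_nonneg_left (hEδ (T+1)) hα0.le
      have h4 : 2*L/N * ∑ t ∈ Finset.range (T+1), (1-(1-α)^(T+1-t)) * γ t
          = (1-α) * (2*L/N * ∑ t ∈ Finset.range T, (1-(1-α)^(T-t)) * γ t)
            + α * (2*L/N * ∑ t ∈ Finset.range (T+1), γ t) := by
        rw [hS T]; ring
      rw [h4]
      linarith
  have hfd : ∀ (zz : Z) (w : EuclideanSpace ℝ (Fin d)), ‖fderiv ℝ (f · zz) w‖ ≤ L := by
    intro zz w
    have hgw := (hdiff zz w).hasGradientAt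
    have hF := hasGradientAt_iff_hasFDerivAt.mp hgw
    rw [hF.fderiv]
    rw [(InnerProductSpace.toDual ℝ (EuclideanSpace ℝ (Fin d))).norm_map]
    exact hlip zz w
  have hflip : ∀ (zz : Z) (a b : EuclideanSpace ℝ (Fin d)),
      ‖f a zz - f b zz‖ ≤ L * ‖a - b‖ := by
    intro zz a b
    exact convex_univ.norm_image_sub_le_of_norm_fderiv_le
      (fun w _ => (hdiff zz) w) (fun w _ => hfd zz w) (Set.mem_univ b) (Set.mem_univ a)
  refine ⟨by simpa [div_eq_mul_inv, mul_comm, mul_assoc, mul_left_comm] using hEx T, ?_⟩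
  intro zz
  have hfm : ∀ t, Measurable (fun ω => f (x t ω) zz - f (x' t ω) zz) := by
    intro t
    obtain ⟨h1, _, h3, _⟩ := hms t
    exact (((hdiff zz).continuous.measurable).comp h1).sub
      (((hdiff zz).continuous.measurable).comp h3)
  have hfint : Integrable (fun ω => f (x T ω) zz - f (x' T ω) zz) μ := by
    refine hintab _ (L * B T) (hfm T) fun ω => ?_
    refine (hflip zz _ _).trans ?_
    exact mul_le_mul_of_nonneg_left (hxbd T ω) hL
  have hpt : ∀ ω, f (x T ω) zz - f (x' T ω) zz ≤ L * ‖x T ω - x' T ω‖ := by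
    intro ω
    refine (le_abs_self _).trans ?_
    rw [← Real.norm_eq_abs]
    exact hflip zz _ _
  have h1 : ∫ ω, (f (x T ω) zz - f (x' T ω) zz) ∂μ
      ≤ ∫ ω, L * ‖x T ω - x' T ω‖ ∂μ :=
    integral_mono hfint ((hDint T).const_mul L) hpt
  rw [integral_const_mul] at h1
  refine h1.trans ?_
  have h2 : L * ∫ ω, ‖x T ω - x' T ω‖ ∂μ
      ≤ L * (2*L/N * ∑ t ∈ Finset.range T, (1-(1-α)^(T-t)) * γ t) :=
    mul_le_mul_of_nonneg_left (hEx T) hL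
  refine h2.trans (le_of_eq ?_)
  rw [pow_two]
  ring
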